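/- Let H, m ∈ ℝ, let p ≥ 2 be an integer, and let φ, ψ : ℝ × ℝ → ℝ be twice continuously differentiable functions that are 1-periodic in the second (space) variable and satisfy ∂_t φ(t,x) = e^{-Ht} ψ(t,x) and ∂_t ψ(t,x) = -m² e^{Ht} φ(t,x) - e^{Ht} |φ(t,x)|^{p-1} φ(t,x) + e^{-Ht} ∂_x² φ(t,x) for all (t,x). Define H_C(t) = ∫_0^1 [ (1/2) e^{-Ht} ψ(t,x)² + (m²/2) e^{Ht} φ(t,x)² + (1/(p+1)) e^{Ht} |φ(t,x)|^{p+1} + (1/2) e^{-Ht} (∂_x φ(t,x))² ] dx, and define the modified total Hamiltonian H̃_C(t) = H_C(t) - (H/2) ∫_0^t e^{Hs} ( ∫_0^1 [ -e^{-2Hs} ψ(s,x)² + m² φ(s,x)² + (2/(p+1)) |φ(s,x)|^{p+1} - e^{-2Hs} (∂_x φ(s,x))² ] dx ) ds. Then H̃_C(t) = H_C(0) for all t ∈ ℝ. -/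

import Mathlib

open Real Filter

noncomputable def pdx (f : ℝ → ℝ → ℝ) : ℝ → ℝ → ℝ :=
  fun t x => fderiv ℝ (Function.uncurry f) (t, x) (0, 1)

noncomputable def pdt (f : ℝ → ℝ → ℝ) : ℝ → ℝ → ℝ :=
  fun t x => fderiv ℝ (Function.uncurry f) (t, x) (1, 0)

lemma sliceX {G : ℝ × ℝ → ℝ} {t x : ℝ} (hG : DifferentiableAt ℝ G (t, x)) :
    HasDerivAt (fun y => G (t, y)) (fderiv ℝ G (t, x) (0, 1)) x := by
  have h1 : HasDerivAt (fun y : ℝ => ((t, y) : ℝ × ℝ)) (((0:ℝ), (1:ℝ))) x :=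
    (hasDerivAt_const x t).prodMk (hasDerivAt_id x)
  exact (hG.hasFDerivAt.comp_hasDerivAt x h1)

lemma sliceT {G : ℝ × ℝ → ℝ} {t x : ℝ} (hG : DifferentiableAt ℝ G (t, x)) :
    HasDerivAt (fun s => G (s, x)) (fderiv ℝ G (t, x) (1, 0)) t := by
  have h1 : HasDerivAt (fun s : ℝ => ((s, x) : ℝ × ℝ)) (((1:ℝ), (0:ℝ))) t :=
    (hasDerivAt_id t).prodMk (hasDerivAt_const t x)
  exact (hG.hasFDerivAt.comp_hasDerivAt t h1)

lemma pdx_spec {f : ℝ → ℝ → ℝ} (hf : ContDiff ℝ 2 (Function.uncurry f)) (t x : ℝ) :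
    HasDerivAt (fun y => f t y) (pdx f t x) x :=
  sliceX (hf.differentiable two_ne_zero).differentiableAt

lemma pdt_spec {f : ℝ → ℝ → ℝ} (hf : ContDiff ℝ 2 (Function.uncurry f)) (t x : ℝ) :
    HasDerivAt (fun s => f s x) (pdt f t x) t :=
  sliceT (hf.differentiable two_ne_zero).differentiableAt

lemma pdx_deriv {f : ℝ → ℝ → ℝ} (hf : ContDiff ℝ 2 (Function.uncurry f)) (t x : ℝ) :
    deriv (fun y => f t y) x = pdx f t x := (pdx_spec hf t x).deriv

lemma contDiff_uncurry_pdx {f : ℝ → ℝ → ℝ} (hf : ContDiff ℝ 2 (Function.uncurry f)) :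
    ContDiff ℝ 1 (Function.uncurry (pdx f)) := by
  have h1 : ContDiff ℝ 1 (fderiv ℝ (Function.uncurry f)) := hf.fderiv_right (by norm_num)
  exact h1.clm_apply contDiff_const

/-- second space derivative slice -/
lemma pdxx_spec {f : ℝ → ℝ → ℝ} (hf : ContDiff ℝ 2 (Function.uncurry f)) (t x : ℝ) :
    HasDerivAt (fun y => pdx f t y) (pdx (pdx f) t x) x :=
  sliceX (((contDiff_uncurry_pdx hf).differentiable one_ne_zero).differentiableAt)

lemma pdxx_deriv {f : ℝ → ℝ → ℝ} (hf : ContDiff ℝ 2 (Function.uncurry f)) (t x : ℝ) :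
    deriv (deriv (fun y => f t y)) x = pdx (pdx f) t x := by
  have h1 : deriv (fun y => f t y) = fun y => pdx f t y := funext fun y => pdx_deriv hf t y
  rw [h1]
  exact (pdxx_spec hf t x).deriv

lemma fderiv_eval {F : ℝ × ℝ → ℝ} (hF : ContDiff ℝ 2 F) (q : ℝ × ℝ) (v w : ℝ × ℝ) :
    fderiv ℝ (fun q' => fderiv ℝ F q' v) q w = (fderiv ℝ (fderiv ℝ F) q w) v := by
  have hd : DifferentiableAt ℝ (fderiv ℝ F) q :=
    ((hF.fderiv_right (m := 1) (by norm_num)).differentiable one_ne_zero).differentiableAt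
  have := fderiv_comp (𝕜 := ℝ) q (ContinuousLinearMap.apply ℝ ℝ v).differentiableAt hd
  rw [show (fun q' => fderiv ℝ F q' v) =
      (ContinuousLinearMap.apply ℝ ℝ v) ∘ (fderiv ℝ F) from rfl, this]
  simp

lemma mixed_symm {F : ℝ × ℝ → ℝ} (hF : ContDiff ℝ 2 F) (q : ℝ × ℝ) (v w : ℝ × ℝ) :
    fderiv ℝ (fderiv ℝ F) q v w = fderiv ℝ (fderiv ℝ F) q w v :=
  (hF.contDiffAt.isSymmSndFDerivAt (by simp)).eq v w

lemma clairaut {H : ℝ} {φ ψ : ℝ → ℝ → ℝ}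
    (hφ : ContDiff ℝ 2 (Function.uncurry φ))
    (hψ : ContDiff ℝ 2 (Function.uncurry ψ))
    (hevφ : ∀ t x : ℝ, deriv (fun s => φ s x) t = exp (-(H * t)) * ψ t x)
    (t x : ℝ) :
    HasDerivAt (fun s => pdx φ s x) (exp (-(H * t)) * pdx ψ t x) t := by
  have hpdx1 : ContDiff ℝ 1 (Function.uncurry (pdx φ)) := contDiff_uncurry_pdx hφ
  have h1 : HasDerivAt (fun s => pdx φ s x) (pdt (pdx φ) t x) t :=
    sliceT ((hpdx1.differentiable one_ne_zero).differentiableAt)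
  have key : pdt (pdx φ) t x = exp (-(H * t)) * pdx ψ t x := by
    have e1 : pdt (pdx φ) t x
        = fderiv ℝ (fderiv ℝ (Function.uncurry φ)) (t, x) (1, 0) (0, 1) :=
      fderiv_eval hφ (t, x) (0, 1) (1, 0)
    have e2 : fderiv ℝ (fderiv ℝ (Function.uncurry φ)) (t, x) (0, 1) (1, 0)
        = pdx (pdt φ) t x := (fderiv_eval hφ (t, x) (1, 0) (0, 1)).symm
    rw [e1, mixed_symm hφ, e2]
    have hfun : Function.uncurry (pdt φ)
        = fun q : ℝ × ℝ => exp (-(H * q.1)) * Function.uncurry ψ q := by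
      funext q
      have : pdt φ q.1 q.2 = deriv (fun s => φ s q.2) q.1 := (pdt_spec hφ q.1 q.2).deriv.symm
      simp only [Function.uncurry]
      rw [this, hevφ]
    have hGdiff : DifferentiableAt ℝ (Function.uncurry (pdt φ)) (t, x) := by
      rw [hfun]
      have hc : ContDiff ℝ 1 (fun q : ℝ × ℝ => exp (-(H * q.1)) * Function.uncurry ψ q) := by
        have h4 : ContDiff ℝ 1 (fun q : ℝ × ℝ => exp (-(H * q.1))) := by
          have : ContDiff ℝ 1 (fun q : ℝ × ℝ => -(H * q.1)) := by fun_prop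
          exact (Real.contDiff_exp.of_le le_top).comp this
        exact h4.mul (hψ.of_le one_le_two)
      exact (hc.differentiable one_ne_zero).differentiableAt
    have hs : HasDerivAt (fun y => pdt φ t y) (pdx (pdt φ) t x) x := sliceX hGdiff
    have hs2 : HasDerivAt (fun y => pdt φ t y) (exp (-(H * t)) * pdx ψ t x) x := by
      have h3 : (fun y => pdt φ t y) = fun y => exp (-(H * t)) * ψ t y := by
        funext y
        have := congrFun hfun (t, y)
        simpa [Function.uncurry] using this
      rw [h3]
      exact (pdx_spec hψ t x).const_mul _
    exact hs.unique hs2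
  rwa [key] at h1

lemma hasDerivAt_abs_pow (n : ℕ) (u : ℝ) :
    HasDerivAt (fun v : ℝ => |v| ^ (n + 2)) (((n : ℝ) + 2) * |u| ^ n * u) u := by
  rcases lt_trichotomy u 0 with hu | hu | hu
  · have h : HasDerivAt (fun v : ℝ => (-v) ^ (n + 2))
        (((n + 2 : ℕ) : ℝ) * (-u) ^ (n + 1) * (-1)) u := by
      have := (hasDerivAt_pow (n + 2) (-u)).comp u (hasDerivAt_neg u)
      simpa [Function.comp_def] using this
    have heq : (fun v : ℝ => |v| ^ (n + 2)) =ᶠ[nhds u] fun v => (-v) ^ (n + 2) := by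
      filter_upwards [Iio_mem_nhds hu] with v hv
      rw [abs_of_neg hv]
    refine (h.congr_of_eventuallyEq heq).congr_deriv ?_
    rw [abs_of_neg hu]; push_cast; ring
  · subst hu
    have : HasDerivAt (fun v : ℝ => |v| ^ (n + 2)) 0 0 := by
      rw [hasDerivAt_iff_tendsto_slope]
      have hb : ∀ v : ℝ, ‖slope (fun v : ℝ => |v| ^ (n + 2)) 0 v‖ ≤ |v| ^ (n + 1) := by
        intro v
        rcases eq_or_ne v 0 with rfl | hv
        · simp [slope]
        · rw [slope_def_field]
          have hv' : |v| ≠ 0 := abs_ne_zero.mpr hv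
          have h5 : (|v| ^ (n + 2) - |(0:ℝ)| ^ (n + 2)) / (v - 0) = |v| ^ (n + 2) / v := by
            simp
          rw [h5, norm_div, Real.norm_eq_abs, Real.norm_eq_abs,
            abs_pow, abs_abs, pow_succ]
          rw [mul_div_assoc, div_self hv', mul_one]
      refine squeeze_zero_norm hb ?_
      have h6 : Tendsto (fun v : ℝ => |v| ^ (n + 1)) (nhds 0) (nhds 0) := by
        have : Tendsto (fun v : ℝ => |v| ^ (n + 1)) (nhds 0) (nhds (|(0:ℝ)| ^ (n + 1))) :=
          ((continuous_abs.pow (n + 1)).tendsto (0:ℝ))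
        simpa using this
      exact h6.mono_left nhdsWithin_le_nhds
    simpa using this
  · have h : HasDerivAt (fun v : ℝ => v ^ (n + 2))
        (((n + 2 : ℕ) : ℝ) * u ^ (n + 1)) u := hasDerivAt_pow _ _
    have heq : (fun v : ℝ => |v| ^ (n + 2)) =ᶠ[nhds u] fun v => v ^ (n + 2) := by
      filter_upwards [Ioi_mem_nhds hu] with v hv
      rw [abs_of_pos hv]
    refine (h.congr_of_eventuallyEq heq).congr_deriv ?_
    rw [abs_of_pos hu]; push_cast; ring

section EnergyDeriv

variable {H m : ℝ} {p : ℕ} {φ ψ : ℝ → ℝ → ℝ}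

/-- the energy density, with partial derivatives spelt via `pdx` -/
noncomputable def Edens (H m : ℝ) (p : ℕ) (φ ψ : ℝ → ℝ → ℝ) (t x : ℝ) : ℝ :=
  (1 / 2) * exp (-(H * t)) * (ψ t x) ^ 2
    + (m ^ 2 / 2) * exp (H * t) * (φ t x) ^ 2
    + (1 / ((p : ℝ) + 1)) * exp (H * t) * |φ t x| ^ (p + 1)
    + (1 / 2) * exp (-(H * t)) * (pdx φ t x) ^ 2

noncomputable def gdens (H m : ℝ) (p : ℕ) (φ ψ : ℝ → ℝ → ℝ) (t x : ℝ) : ℝ :=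
  -(exp (-(2 * H * t))) * (ψ t x) ^ 2
    + m ^ 2 * (φ t x) ^ 2
    + (2 / ((p : ℝ) + 1)) * |φ t x| ^ (p + 1)
    - exp (-(2 * H * t)) * (pdx φ t x) ^ 2

noncomputable def Ddens (H m : ℝ) (p : ℕ) (φ ψ : ℝ → ℝ → ℝ) (t x : ℝ) : ℝ :=
  (H / 2) * exp (H * t) * gdens H m p φ ψ t x
    + exp (-(2 * H * t)) * (pdx ψ t x * pdx φ t x + ψ t x * pdx (pdx φ) t x)

lemma energy_hasDerivAt (hp : 2 ≤ p)
    (hφ : ContDiff ℝ 2 (Function.uncurry φ))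
    (hψ : ContDiff ℝ 2 (Function.uncurry ψ))
    (hevφ : ∀ t x : ℝ, deriv (fun s => φ s x) t = exp (-(H * t)) * ψ t x)
    (hevψ : ∀ t x : ℝ, deriv (fun s => ψ s x) t
      = -m ^ 2 * exp (H * t) * φ t x
        - exp (H * t) * |φ t x| ^ (p - 1) * φ t x
        + exp (-(H * t)) * deriv (deriv (fun y => φ t y)) x)
    (t x : ℝ) :
    HasDerivAt (fun s => Edens H m p φ ψ s x) (Ddens H m p φ ψ t x) t := by
  -- basic exponential derivatives
  have hlin1 : HasDerivAt (fun s : ℝ => -(H * s)) (-H) t := by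
    exact (((hasDerivAt_id t).const_mul H).neg).congr_deriv (by ring)
  have hlin2 : HasDerivAt (fun s : ℝ => H * s) H t := by
    exact ((hasDerivAt_id t).const_mul H).congr_deriv (by ring)
  have hexp1 : HasDerivAt (fun s => exp (-(H * s))) (exp (-(H * t)) * (-H)) t := hlin1.exp
  have hexp2 : HasDerivAt (fun s => exp (H * s)) (exp (H * t) * H) t := hlin2.exp
  -- time derivatives of the fields
  have hφt : HasDerivAt (fun s => φ s x) (exp (-(H * t)) * ψ t x) t := by
    have h := pdt_spec hφ t x
    rwa [show pdt φ t x = exp (-(H * t)) * ψ t x from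
      ((pdt_spec hφ t x).deriv).symm.trans (hevφ t x)] at h
  have hψt : HasDerivAt (fun s => ψ s x)
      (-m ^ 2 * exp (H * t) * φ t x
        - exp (H * t) * |φ t x| ^ (p - 1) * φ t x
        + exp (-(H * t)) * pdx (pdx φ) t x) t := by
    have h := pdt_spec hψ t x
    have e : pdt ψ t x = -m ^ 2 * exp (H * t) * φ t x
        - exp (H * t) * |φ t x| ^ (p - 1) * φ t x
        + exp (-(H * t)) * pdx (pdx φ) t x := by
      rw [← (pdt_spec hψ t x).deriv, hevψ, pdxx_deriv hφ]
    rwa [e] at h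
  have hφxt : HasDerivAt (fun s => pdx φ s x) (exp (-(H * t)) * pdx ψ t x) t :=
    clairaut hφ hψ hevφ t x
  -- derivative of |φ|^(p+1)
  have habs : HasDerivAt (fun s => |φ s x| ^ (p + 1))
      (((p : ℝ) + 1) * |φ t x| ^ (p - 1) * φ t x * (exp (-(H * t)) * ψ t x)) t := by
    have h0 := (hasDerivAt_abs_pow (p - 1) (φ t x)).comp t hφt
    have hn : p - 1 + 2 = p + 1 := by omega
    have hc : ((p - 1 : ℕ) : ℝ) + 2 = (p : ℝ) + 1 := by
      have : (1:ℕ) ≤ p := by omega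
      push_cast [this]
      ring
    rw [hn, hc] at h0
    exact h0
  -- assemble
  have T1 := (hexp1.const_mul (1/2 : ℝ)).mul (hψt.pow 2)
  have T2 := (hexp2.const_mul ((m ^ 2 / 2 : ℝ))).mul (hφt.pow 2)
  have T3 := (hexp2.const_mul ((1 : ℝ) / ((p : ℝ) + 1))).mul habs
  have T4 := (hexp1.const_mul (1/2 : ℝ)).mul (hφxt.pow 2)
  have Tot := ((T1.add T2).add T3).add T4
  have : HasDerivAt (fun s => Edens H m p φ ψ s x) _ t := Tot
  convert this using 1
  -- the scalar identity
  have hp1 : ((p : ℝ) + 1) ≠ 0 := by positivity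
  have hE1 : exp (-(H * t)) = (exp (H * t))⁻¹ := Real.exp_neg (H * t)
  have hE2 : exp (-(2 * H * t)) = (exp (H * t))⁻¹ * (exp (H * t))⁻¹ := by
    rw [← Real.exp_neg, ← Real.exp_add]
    congr 1
    ring
  simp only [Ddens, gdens, hE1, hE2, Pi.pow_apply]
  have hne : exp (H * t) ≠ 0 := Real.exp_ne_zero _
  field_simp
  ring

lemma continuous_uncurry_pdxx {f : ℝ → ℝ → ℝ} (hf : ContDiff ℝ 2 (Function.uncurry f)) :
    Continuous (Function.uncurry (pdx (pdx f))) := by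
  have h1 : ContDiff ℝ 1 (Function.uncurry (pdx f)) := contDiff_uncurry_pdx hf
  have h2 : Continuous (fderiv ℝ (Function.uncurry (pdx f))) := h1.continuous_fderiv one_ne_zero
  exact h2.clm_apply continuous_const

lemma continuous_Edens
    (hφ : ContDiff ℝ 2 (Function.uncurry φ)) (hψ : ContDiff ℝ 2 (Function.uncurry ψ)) :
    Continuous (fun q : ℝ × ℝ => Edens H m p φ ψ q.1 q.2) := by
  have cφ : Continuous (fun q : ℝ × ℝ => φ q.1 q.2) := hφ.continuous
  have cψ : Continuous (fun q : ℝ × ℝ => ψ q.1 q.2) := hψ.continuous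
  have cpx : Continuous (fun q : ℝ × ℝ => pdx φ q.1 q.2) :=
    (contDiff_uncurry_pdx hφ).continuous
  unfold Edens
  fun_prop

lemma continuous_gdens
    (hφ : ContDiff ℝ 2 (Function.uncurry φ)) (hψ : ContDiff ℝ 2 (Function.uncurry ψ)) :
    Continuous (fun q : ℝ × ℝ => gdens H m p φ ψ q.1 q.2) := by
  have cφ : Continuous (fun q : ℝ × ℝ => φ q.1 q.2) := hφ.continuous
  have cψ : Continuous (fun q : ℝ × ℝ => ψ q.1 q.2) := hψ.continuous
  have cpx : Continuous (fun q : ℝ × ℝ => pdx φ q.1 q.2) :=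
    (contDiff_uncurry_pdx hφ).continuous
  unfold gdens
  fun_prop

lemma continuous_Ddens
    (hφ : ContDiff ℝ 2 (Function.uncurry φ)) (hψ : ContDiff ℝ 2 (Function.uncurry ψ)) :
    Continuous (fun q : ℝ × ℝ => Ddens H m p φ ψ q.1 q.2) := by
  have cg : Continuous (fun q : ℝ × ℝ => gdens H m p φ ψ q.1 q.2) := continuous_gdens hφ hψ
  have cφ : Continuous (fun q : ℝ × ℝ => φ q.1 q.2) := hφ.continuous
  have cψ : Continuous (fun q : ℝ × ℝ => ψ q.1 q.2) := hψ.continuous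
  have cpxφ : Continuous (fun q : ℝ × ℝ => pdx φ q.1 q.2) :=
    (contDiff_uncurry_pdx hφ).continuous
  have cpxψ : Continuous (fun q : ℝ × ℝ => pdx ψ q.1 q.2) :=
    (contDiff_uncurry_pdx hψ).continuous
  have cpxx : Continuous (fun q : ℝ × ℝ => pdx (pdx φ) q.1 q.2) :=
    continuous_uncurry_pdxx hφ
  unfold Ddens
  fun_prop

/-- integration by parts via periodicity -/
lemma ibp_zero
    (hφ : ContDiff ℝ 2 (Function.uncurry φ)) (hψ : ContDiff ℝ 2 (Function.uncurry ψ))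
    (hφper : ∀ t x : ℝ, φ t (x + 1) = φ t x)
    (hψper : ∀ t x : ℝ, ψ t (x + 1) = ψ t x) (t : ℝ) :
    (∫ x in (0:ℝ)..1, (pdx ψ t x * pdx φ t x + ψ t x * pdx (pdx φ) t x)) = 0 := by
  have hw : ∀ y ∈ Set.uIcc (0:ℝ) 1, HasDerivAt (fun y => ψ t y * pdx φ t y)
      (pdx ψ t y * pdx φ t y + ψ t y * pdx (pdx φ) t y) y :=
    fun y _ => (pdx_spec hψ t y).mul (pdxx_spec hφ t y)
  have hcont : Continuous (fun y => pdx ψ t y * pdx φ t y + ψ t y * pdx (pdx φ) t y) := by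
    have c1 : Continuous (fun y : ℝ => pdx ψ t y) :=
      (contDiff_uncurry_pdx hψ).continuous.comp (Continuous.prodMk_right t)
    have c2 : Continuous (fun y : ℝ => pdx φ t y) :=
      (contDiff_uncurry_pdx hφ).continuous.comp (Continuous.prodMk_right t)
    have c3 : Continuous (fun y : ℝ => ψ t y) :=
      hψ.continuous.comp (Continuous.prodMk_right t)
    have c4 : Continuous (fun y : ℝ => pdx (pdx φ) t y) :=
      (continuous_uncurry_pdxx hφ).comp (Continuous.prodMk_right t)
    fun_prop
  rw [intervalIntegral.integral_eq_sub_of_hasDerivAt hw (hcont.intervalIntegrable 0 1)]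
  have h1 : ψ t 1 = ψ t 0 := by simpa using hψper t 0
  have h2 : pdx φ t 1 = pdx φ t 0 := by
    rw [← pdx_deriv hφ, ← pdx_deriv hφ]
    have hshift : (fun y => φ t (y + 1)) = fun y => φ t y := funext (hφper t)
    have := deriv_comp_add_const (fun y => φ t y) 1 0
    rw [hshift] at this
    simpa using this.symm
  rw [h1, h2]
  ring

lemma integral_energy_hasDerivAt (hp : 2 ≤ p)
    (hφ : ContDiff ℝ 2 (Function.uncurry φ))
    (hψ : ContDiff ℝ 2 (Function.uncurry ψ))
    (hevφ : ∀ t x : ℝ, deriv (fun s => φ s x) t = exp (-(H * t)) * ψ t x)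
    (hevψ : ∀ t x : ℝ, deriv (fun s => ψ s x) t
      = -m ^ 2 * exp (H * t) * φ t x
        - exp (H * t) * |φ t x| ^ (p - 1) * φ t x
        + exp (-(H * t)) * deriv (deriv (fun y => φ t y)) x)
    (t : ℝ) :
    HasDerivAt (fun s => ∫ x in (0:ℝ)..1, Edens H m p φ ψ s x)
      (∫ x in (0:ℝ)..1, Ddens H m p φ ψ t x) t := by
  have cE := continuous_Edens (H := H) (m := m) (p := p) hφ hψ
  have cD := continuous_Ddens (H := H) (m := m) (p := p) hφ hψ
  obtain ⟨C, hC⟩ : ∃ C, ∀ q ∈ (Set.Icc (t-1) (t+1) ×ˢ Set.Icc (0:ℝ) 1),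
      ‖Ddens H m p φ ψ q.1 q.2‖ ≤ C :=
    (isCompact_Icc.prod isCompact_Icc).exists_bound_of_continuousOn cD.continuousOn
  have main := intervalIntegral.hasDerivAt_integral_of_dominated_loc_of_deriv_le
    (F := fun s x => Edens H m p φ ψ s x) (F' := fun s x => Ddens H m p φ ψ s x)
    (x₀ := t) (a := (0:ℝ)) (b := 1) (bound := fun _ => C) (μ := MeasureTheory.volume)
    (s := Metric.ball t 1) (Metric.ball_mem_nhds t one_pos)
    (Filter.Eventually.of_forall fun s =>
      ((cE.comp (Continuous.prodMk_right s)).aestronglyMeasurable))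
    ((cE.comp (Continuous.prodMk_right t)).intervalIntegrable 0 1)
    ((cD.comp (Continuous.prodMk_right t)).aestronglyMeasurable)
    (Filter.Eventually.of_forall ?_)
    (intervalIntegrable_const)
    (Filter.Eventually.of_forall ?_)
  · exact main.2
  · intro x hx s hs
    apply hC (s, x)
    constructor
    · have : s ∈ Set.Ioo (t-1) (t+1) := by
        rwa [Real.ball_eq_Ioo] at hs
      exact Set.mem_Icc_of_Ioo this
    · rw [Set.uIoc_of_le (by norm_num : (0:ℝ) ≤ 1)] at hx
      exact Set.mem_Icc_of_Ioc hx
  · intro x _ s _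
    exact energy_hasDerivAt hp hφ hψ hevφ hevψ s x

end EnergyDeriv


lemma continuous_slice2 {G : ℝ × ℝ → ℝ} (hG : Continuous G) (t : ℝ) :
    Continuous (fun y : ℝ => G (t, y)) := by
  have h := hG.comp (Continuous.prodMk_right (Y := ℝ) t)
  exact h

set_option maxHeartbeats 1600000 in
/-- The modified total Hamiltonian of the semilinear Klein--Gordon equation in de Sitter
spacetime (one space dimension `n = 1`, `1`-periodic in space) is constant in time:
subtracting from `H_C` the accumulated change caused by the explicit time dependence
coming from the Hubble constant `H` yields a conserved quantity. -/
theorem deSitter_modified_total_hamiltonian_conserved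
    (H m : ℝ) (p : ℕ) (hp : 2 ≤ p)
    (φ ψ : ℝ → ℝ → ℝ)
    (hφ : ContDiff ℝ 2 (Function.uncurry φ))
    (hψ : ContDiff ℝ 2 (Function.uncurry ψ))
    (hφper : ∀ t x : ℝ, φ t (x + 1) = φ t x)
    (hψper : ∀ t x : ℝ, ψ t (x + 1) = ψ t x)
    (hevφ : ∀ t x : ℝ, deriv (fun s => φ s x) t = exp (-(H * t)) * ψ t x)
    (hevψ : ∀ t x : ℝ, deriv (fun s => ψ s x) t
      = -m ^ 2 * exp (H * t) * φ t x
        - exp (H * t) * |φ t x| ^ (p - 1) * φ t x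
        + exp (-(H * t)) * deriv (deriv (fun y => φ t y)) x)
    (H_C H_C' : ℝ → ℝ)
    (hH_C : ∀ t : ℝ, H_C t = ∫ x in (0:ℝ)..1,
      ((1 / 2) * exp (-(H * t)) * (ψ t x) ^ 2
        + (m ^ 2 / 2) * exp (H * t) * (φ t x) ^ 2
        + (1 / ((p : ℝ) + 1)) * exp (H * t) * |φ t x| ^ (p + 1)
        + (1 / 2) * exp (-(H * t)) * (deriv (fun y => φ t y) x) ^ 2))
    (hH_C' : ∀ t : ℝ, H_C' t = H_C t
      - (H / 2) * ∫ s in (0:ℝ)..t, exp (H * s) *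
          ∫ x in (0:ℝ)..1,
            (-(exp (-(2 * H * s))) * (ψ s x) ^ 2
              + m ^ 2 * (φ s x) ^ 2
              + (2 / ((p : ℝ) + 1)) * |φ s x| ^ (p + 1)
              - exp (-(2 * H * s)) * (deriv (fun y => φ s y) x) ^ 2)) :
    ∀ t : ℝ, H_C' t = H_C 0 := by
  -- rewrite everything via `Edens` and `gdens`
  have hIC : ∀ s : ℝ, H_C s = ∫ x in (0:ℝ)..1, Edens H m p φ ψ s x := by
    intro s
    rw [hH_C s]
    apply intervalIntegral.integral_congr
    intro x _
    simp [Edens, pdx_deriv hφ]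
  obtain ⟨G, hG⟩ : ∃ G : ℝ → ℝ, G = fun s => ∫ x in (0:ℝ)..1, gdens H m p φ ψ s x :=
    ⟨_, rfl⟩
  have hGs : ∀ s, G s = ∫ x in (0:ℝ)..1, gdens H m p φ ψ s x := fun s => by rw [hG]
  have hker : ∀ s : ℝ, (∫ x in (0:ℝ)..1,
      (-(exp (-(2 * H * s))) * (ψ s x) ^ 2
        + m ^ 2 * (φ s x) ^ 2
        + (2 / ((p : ℝ) + 1)) * |φ s x| ^ (p + 1)
        - exp (-(2 * H * s)) * (deriv (fun y => φ s y) x) ^ 2)) = G s := by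
    intro s
    rw [hGs]
    apply intervalIntegral.integral_congr
    intro x _
    simp [gdens, pdx_deriv hφ]
  obtain ⟨k, hk⟩ : ∃ k : ℝ → ℝ, k = fun s => exp (H * s) * G s := ⟨_, rfl⟩
  have hks : ∀ s, k s = exp (H * s) * G s := fun s => by rw [hk]
  have hGcont : Continuous G := by
    rw [hG]
    apply intervalIntegral.continuous_parametric_intervalIntegral_of_continuous'
      (f := fun s x => gdens H m p φ ψ s x)
    exact continuous_gdens hφ hψ
  have hkcont : Continuous k := by
    rw [hk]
    exact (Real.continuous_exp.comp (continuous_const.mul continuous_id)).mul hGcont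
  obtain ⟨Φ, hΦ⟩ : ∃ Φ : ℝ → ℝ, Φ = fun u => (∫ x in (0:ℝ)..1, Edens H m p φ ψ u x)
      - (H / 2) * ∫ s in (0:ℝ)..u, k s := ⟨_, rfl⟩
  have hΦ' : ∀ u : ℝ, HasDerivAt Φ 0 u := by
    intro u
    have h1 := integral_energy_hasDerivAt hp hφ hψ hevφ hevψ u
    have h2 : HasDerivAt (fun v => ∫ s in (0:ℝ)..v, k s) (k u) u :=
      intervalIntegral.integral_hasDerivAt_right (hkcont.intervalIntegrable 0 u)
        (hkcont.stronglyMeasurableAtFilter _ _) hkcont.continuousAt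
    have h3 : (∫ x in (0:ℝ)..1, Ddens H m p φ ψ u x) = (H / 2) * k u := by
      have cg : Continuous (fun x : ℝ => gdens H m p φ ψ u x) :=
        continuous_slice2 (continuous_gdens hφ hψ) u
      have cr : Continuous (fun x : ℝ =>
          pdx ψ u x * pdx φ u x + ψ u x * pdx (pdx φ) u x) := by
        have c1 : Continuous (fun y : ℝ => pdx ψ u y) :=
          continuous_slice2 (contDiff_uncurry_pdx hψ).continuous u
        have c2 : Continuous (fun y : ℝ => pdx φ u y) :=
          continuous_slice2 (contDiff_uncurry_pdx hφ).continuous u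
        have c3 : Continuous (fun y : ℝ => ψ u y) :=
          continuous_slice2 hψ.continuous u
        have c4 : Continuous (fun y : ℝ => pdx (pdx φ) u y) :=
          continuous_slice2 (continuous_uncurry_pdxx hφ) u
        fun_prop
      have hsplit : (∫ x in (0:ℝ)..1, Ddens H m p φ ψ u x)
          = (∫ x in (0:ℝ)..1, (H / 2) * exp (H * u) * gdens H m p φ ψ u x)
            + ∫ x in (0:ℝ)..1, exp (-(2 * H * u)) *
                (pdx ψ u x * pdx φ u x + ψ u x * pdx (pdx φ) u x) := by
        simp only [Ddens]
        rw [← intervalIntegral.integral_add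
          ((show Continuous fun x => (H / 2) * exp (H * u) * gdens H m p φ ψ u x from
            continuous_const.mul cg).intervalIntegrable 0 1)
          ((show Continuous fun x => exp (-(2 * H * u)) *
            (pdx ψ u x * pdx φ u x + ψ u x * pdx (pdx φ) u x) from
            continuous_const.mul cr).intervalIntegrable 0 1)]
      rw [hsplit, intervalIntegral.integral_const_mul, intervalIntegral.integral_const_mul,
        ibp_zero hφ hψ hφper hψper u, hks u, hGs u]
      ring
    have h4 := h1.sub ((h2.const_mul (H / 2)))
    rw [h3] at h4
    rw [hΦ]
    simp only [sub_self] at h4; exact h4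
  have hconst : ∀ u : ℝ, Φ u = Φ 0 := by
    intro u
    exact is_const_of_deriv_eq_zero
      (fun v => (hΦ' v).differentiableAt) (fun v => (hΦ' v).deriv) u 0
  intro t
  have hrw : (∫ s in (0:ℝ)..t, exp (H * s) *
      ∫ x in (0:ℝ)..1,
        (-(exp (-(2 * H * s))) * (ψ s x) ^ 2
          + m ^ 2 * (φ s x) ^ 2
          + (2 / ((p : ℝ) + 1)) * |φ s x| ^ (p + 1)
          - exp (-(2 * H * s)) * (deriv (fun y => φ s y) x) ^ 2))
      = ∫ s in (0:ℝ)..t, k s := by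
    apply intervalIntegral.integral_congr
    intro s _
    beta_reduce
    rw [hker s]
    exact (hks s).symm
  have hfin : H_C' t = Φ t := by
    rw [hH_C' t, hIC t, hΦ, hrw]
  rw [hfin, hconst t, hΦ]
  simp [hIC 0]
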